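/- arXiv:2003.07405 — 5 statements merged into one kernel-verified Lean document; each statement's English description precedes it below -/
import Mathlib

section
/- Let n > m ≥ 1 be natural numbers, m = m₁ + m₂ with 0 ≤ m₁ ≤ m, and α ∈ (0, π/2). With c(α) = −arctan(((n − m₁)sin α + m₂ sin 3α)/((n + m₁)cos α + m₂ cos 3α)) and S = √(s₁² + s₂²) where s₁, s₂ are the numerator and denominator above, one has cos(c(α) + α) = (n − m + 2m·cos²α)/S; in particular cos(c(α) + α) > 0. -/
open Real

/-- With `c(α) = −arctan(s₁/s₂)` and `S = √(s₁²+s₂²)` for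
`s₁ = (n−m₁)sin α + m₂ sin 3α`, `s₂ = (n+m₁)cos α + m₂ cos 3α`,
one has `cos(c(α)+α) = (n − m + 2m cos²α)/S`, which is positive. -/
theorem stmt_2 (n m m₁ m₂ : ℕ) (hmn : m < n) (hm : 1 ≤ m) (hsplit : m = m₁ + m₂)
    (α : ℝ) (hα0 : 0 < α) (hα1 : α < π / 2)
    (s₁ s₂ S c : ℝ)
    (hs₁ : s₁ = ((n : ℝ) - m₁) * Real.sin α + (m₂ : ℝ) * Real.sin (3 * α))
    (hs₂ : s₂ = ((n : ℝ) + m₁) * Real.cos α + (m₂ : ℝ) * Real.cos (3 * α))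
    (hS : S = Real.sqrt (s₁ ^ 2 + s₂ ^ 2))
    (hc : c = -Real.arctan (s₁ / s₂))
    (hs₂pos : 0 < s₂) :
    Real.cos (c + α) = ((n : ℝ) - m + 2 * m * Real.cos α ^ 2) / S ∧
      0 < Real.cos (c + α) := by
  have hSeq : S = s₂ * Real.sqrt (1 + (s₁ / s₂) ^ 2) := by
    rw [hS]
    rw [show s₁ ^ 2 + s₂ ^ 2 = s₂ ^ 2 * (1 + (s₁ / s₂) ^ 2) by
      field_simp; ring]
    rw [Real.sqrt_mul (by positivity), Real.sqrt_sq hs₂pos.le]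
  have hroot : (0 : ℝ) < Real.sqrt (1 + (s₁ / s₂) ^ 2) := by positivity
  have hSpos : 0 < S := by rw [hSeq]; positivity
  have hcos : Real.cos (c + α) = (s₂ * Real.cos α + s₁ * Real.sin α) / S := by
    rw [Real.cos_add, hc, Real.cos_neg, Real.sin_neg, Real.cos_arctan, Real.sin_arctan,
      hSeq]
    field_simp
    ring
  have hpyth := Real.sin_sq_add_cos_sq α
  have hnum : s₂ * Real.cos α + s₁ * Real.sin α
      = ((n : ℝ) - m + 2 * m * Real.cos α ^ 2) := by
    have hm₂ : (m₂ : ℝ) = (m : ℝ) - m₁ := by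
      have : (m : ℝ) = m₁ + m₂ := by exact_mod_cast congrArg Nat.cast hsplit
      linarith
    rw [hs₁, hs₂, Real.cos_three_mul, Real.sin_three_mul, hm₂]
    linear_combination (((n:ℝ) - m₁) + 3*((m:ℝ) - m₁)
      - 4*((m:ℝ) - m₁)*(Real.sin α ^ 2 + 1 - Real.cos α ^ 2)) * hpyth
  have hnumpos : (0 : ℝ) < (n : ℝ) - m + 2 * m * Real.cos α ^ 2 := by
    have h1 : (m : ℝ) < n := by exact_mod_cast hmn
    nlinarith [sq_nonneg (Real.cos α), (Nat.cast_nonneg m : (0:ℝ) ≤ m)]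
  refine ⟨by rw [hcos, hnum], ?_⟩
  rw [hcos, hnum]
  positivity
end

section
/- Let n > m ≥ 1 and α ∈ (0, π/2) with tan α < √((n+m)/(n−m)), and set c(α) = −arctan(((n−m)/(n+m)) tan α). Then the (N−1)×(N−1) block-diagonal matrix J = diag(R₁, R₂), where R₁ = −m·cos(c(α)−α)·I_{n−1} and R₂ = −n·cos(c(α)+α)·I_m − cos(c(α)−α)·𝟙ₘ𝟙ₘᵀ, is Hurwitz (all eigenvalues have strictly negative real part). Conversely, if tan α > √((n+m)/(n−m)) then J has a strictly positive eigenvalue. -/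
open Matrix Real

lemma block_eigen_cases {p q : ℕ} (a b d : ℂ) (μ : ℂ)
    (h : Module.End.HasEigenvalue (Matrix.toLin'
      (Matrix.fromBlocks (a • (1 : Matrix (Fin p) (Fin p) ℂ)) 0 0
        (b • (1 : Matrix (Fin q) (Fin q) ℂ) + d • Matrix.of fun _ _ => (1:ℂ)))) μ) :
    μ = a ∨ μ = b ∨ μ = b + q * d := by
  obtain ⟨v, hv⟩ := h.exists_hasEigenvector
  have hv0 := hv.2
  have hm : _ = μ • v := hv.apply_eq_smul
  rw [Matrix.toLin'_apply, Matrix.fromBlocks_mulVec] at hm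
  have h1 : ∀ i : Fin p, a * v (Sum.inl i) = μ * v (Sum.inl i) := by
    intro i
    have := congrFun hm (Sum.inl i)
    simpa [Matrix.smul_mulVec, Matrix.one_mulVec] using this
  have h2 : ∀ j : Fin q, b * v (Sum.inr j) + d * (∑ k : Fin q, v (Sum.inr k))
      = μ * v (Sum.inr j) := by
    intro j
    have := congrFun hm (Sum.inr j)
    simpa [Matrix.add_mulVec, Matrix.smul_mulVec, Matrix.one_mulVec,
      Matrix.mulVec, dotProduct, Finset.mul_sum] using this
  by_cases hex : ∃ i : Fin p, v (Sum.inl i) ≠ 0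
  · obtain ⟨i, hi⟩ := hex
    left
    have := h1 i
    exact (mul_right_cancel₀ hi this).symm
  · push_neg at hex
    set s := ∑ k : Fin q, v (Sum.inr k) with hs
    by_cases hs0 : s = 0
    · right; left
      have hj : ∃ j : Fin q, v (Sum.inr j) ≠ 0 := by
        by_contra hall
        push_neg at hall
        apply hv0
        funext x
        cases x with
        | inl i => exact hex i
        | inr j => exact hall j
      obtain ⟨j, hj⟩ := hj
      have := h2 j
      rw [hs0, mul_zero, add_zero] at this
      exact (mul_right_cancel₀ hj this).symm
    · right; right
      have hsum : b * s + d * (q * s) = μ * s := by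
        have : ∑ j : Fin q, (b * v (Sum.inr j) + d * s) = ∑ j : Fin q, μ * v (Sum.inr j) :=
          Finset.sum_congr rfl fun j _ => h2 j
        simp [Finset.sum_add_distrib, ← Finset.mul_sum, ← hs] at this
        linear_combination this
      have : (b + q * d) * s = μ * s := by linear_combination hsum
      have := mul_right_cancel₀ hs0 this
      exact this.symm

set_option maxHeartbeats 1600000 in
/-- Stability threshold: for `c(α) = −arctan(((n−m)/(n+m))tan α)`, the
block-diagonal Jacobian `J = diag(R₁, R₂)` with
`R₁ = −m cos(c−α) I_{n−1}` and `R₂ = −n cos(c+α) I_m − cos(c−α) 𝟙𝟙ᵀ` is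
Hurwitz when `tan α < √((n+m)/(n−m))`, and has a strictly positive eigenvalue
when `tan α > √((n+m)/(n−m))`. -/
theorem stmt_11 (n m : ℕ) (hmn : m < n) (hm : 1 ≤ m)
    (α : ℝ) (hα0 : 0 < α) (hα1 : α < π / 2)
    (c : ℝ) (hc : c = -Real.arctan ((((n : ℝ) - m) / ((n : ℝ) + m)) * Real.tan α))
    (R₁ : Matrix (Fin (n - 1)) (Fin (n - 1)) ℝ)
    (R₂ : Matrix (Fin m) (Fin m) ℝ)
    (hR₁ : R₁ = (-((m : ℝ) * Real.cos (c - α))) • (1 : Matrix (Fin (n - 1)) (Fin (n - 1)) ℝ))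
    (hR₂ : R₂ = (-((n : ℝ) * Real.cos (c + α))) • (1 : Matrix (Fin m) (Fin m) ℝ) +
      (-(Real.cos (c - α))) • (Matrix.of fun _ _ => (1 : ℝ)))
    (J : Matrix (Fin (n - 1) ⊕ Fin m) (Fin (n - 1) ⊕ Fin m) ℝ)
    (hJ : J = Matrix.fromBlocks R₁ 0 0 R₂) :
    (Real.tan α < Real.sqrt (((n : ℝ) + m) / ((n : ℝ) - m)) →
      ∀ μ : ℂ, Module.End.HasEigenvalue (Matrix.toLin' (J.map (Complex.ofReal : ℝ → ℂ))) μ →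
        μ.re < 0) ∧
    (Real.sqrt (((n : ℝ) + m) / ((n : ℝ) - m)) < Real.tan α →
      ∃ μ : ℝ, 0 < μ ∧ Module.End.HasEigenvalue (Matrix.toLin' J) μ) := by
  have hn2 : 2 ≤ n := by omega
  have hM : (1:ℝ) ≤ (m:ℝ) := by exact_mod_cast hm
  have hNM : (m:ℝ) < (n:ℝ) := by exact_mod_cast hmn
  set N := (n:ℝ) with hN
  set M := (m:ℝ) with hMd
  set t := Real.tan α with htdef
  set r := (N - M)/(N + M) with hrdef
  have hr : 0 < r := div_pos (by linarith) (by linarith)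
  have ht : 0 < t := Real.tan_pos_of_pos_of_lt_pi_div_two hα0 hα1
  have hcos : 0 < Real.cos α := Real.cos_pos_of_mem_Ioo ⟨by linarith [Real.pi_pos], hα1⟩
  have hsin : 0 < Real.sin α := Real.sin_pos_of_pos_of_lt_pi hα0 (by linarith [Real.pi_pos])
  have hts : Real.sin α = t * Real.cos α := by
    rw [htdef, Real.tan_eq_sin_div_cos]; field_simp
  have hS : (0:ℝ) < Real.sqrt (1 + (r*t)^2) := Real.sqrt_pos.mpr (by positivity)
  have hcm : Real.cos (c - α)
      = (Real.cos α - (r*t) * Real.sin α) / Real.sqrt (1+(r*t)^2) := by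
    have h1 : c - α = -(Real.arctan (r*t) + α) := by rw [hc]; ring_nf
    rw [h1, Real.cos_neg, Real.cos_add, Real.cos_arctan, Real.sin_arctan]
    field_simp
  have hcp : Real.cos (c + α)
      = (Real.cos α + (r*t) * Real.sin α) / Real.sqrt (1+(r*t)^2) := by
    have h1 : c + α = -(Real.arctan (r*t) - α) := by rw [hc]; ring_nf
    rw [h1, Real.cos_neg, Real.cos_sub, Real.cos_arctan, Real.sin_arctan]
    field_simp
  have hrq : r * ((N + M)/(N - M)) = 1 := by
    rw [hrdef]; field_simp
    exact div_self (mul_ne_zero (by linarith) (by linarith))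
  constructor
  · -- stable case
    intro hlt μ hμ
    have ht2 : t^2 < (N + M)/(N - M) := (Real.lt_sqrt ht.le).mp hlt
    have hrt2 : r * t^2 < 1 := by
      calc r * t^2 < r * ((N + M)/(N - M)) := by
            exact (mul_lt_mul_iff_right₀ hr).mpr ht2
        _ = 1 := hrq
    have hcmpos : 0 < Real.cos (c - α) := by
      rw [hcm]
      apply div_pos _ hS
      nlinarith
    have hcppos : 0 < Real.cos (c + α) := by
      rw [hcp]
      apply div_pos _ hS
      nlinarith [mul_pos (mul_pos hr ht) hsin]
    -- rewrite the complex matrix in block form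
    have hmap : J.map (Complex.ofReal : ℝ → ℂ)
        = Matrix.fromBlocks
            (((-(M * Real.cos (c - α)) : ℝ) : ℂ) • (1 : Matrix (Fin (n-1)) (Fin (n-1)) ℂ)) 0 0
            (((-(N * Real.cos (c + α)) : ℝ) : ℂ) • (1 : Matrix (Fin m) (Fin m) ℂ)
              + ((-(Real.cos (c - α)) : ℝ) : ℂ) • Matrix.of fun _ _ => (1:ℂ)) := by
      subst hJ hR₁ hR₂
      ext x y
      cases x <;> cases y <;>
        simp [Matrix.map_apply, Matrix.one_apply, apply_ite (Complex.ofReal : ℝ → ℂ)]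
    rw [hmap] at hμ
    have := block_eigen_cases _ _ _ _ hμ
    rcases this with h | h | h
    · rw [h]
      simp only [Complex.ofReal_re]
      nlinarith
    · rw [h]
      simp only [Complex.ofReal_re]
      nlinarith
    · have hmu : μ = ((-(N * Real.cos (c + α)) - M * Real.cos (c - α) : ℝ) : ℂ) := by
        rw [h]; simp only [hMd]; push_cast; ring
      rw [hmu, Complex.ofReal_re]
      nlinarith
  · -- unstable case
    intro hgt
    have ht2 : (N + M)/(N - M) < t^2 := (Real.sqrt_lt' ht).mp hgt
    have hrt2 : 1 < r * t^2 := by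
      calc 1 = r * ((N + M)/(N - M)) := hrq.symm
        _ < r * t^2 := (mul_lt_mul_iff_right₀ hr).mpr ht2
    have hcmneg : Real.cos (c - α) < 0 := by
      rw [hcm]
      apply div_neg_of_neg_of_pos _ hS
      nlinarith
    refine ⟨-(M * Real.cos (c - α)), by nlinarith, ?_⟩
    set i0 : Fin (n - 1) := ⟨0, by omega⟩ with hi0
    set v : (Fin (n-1) ⊕ Fin m) → ℝ := Pi.single (Sum.inl i0) 1 with hvdef
    have hvne : v ≠ 0 := by
      intro h
      have := congrFun h (Sum.inl i0)
      simp [hvdef] at this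
    apply Module.End.hasEigenvalue_of_hasEigenvector (x := v)
    refine ⟨Module.End.mem_eigenspace_iff.mpr ?_, hvne⟩
    rw [Matrix.toLin'_apply]
    funext x
    rw [hJ, hR₁]
    cases x with
    | inl i =>
      simp only [hvdef, Matrix.mulVec, dotProduct, Pi.single_apply,
        Matrix.one_apply, Fintype.sum_sum_type, mul_ite, ite_mul, Matrix.fromBlocks_apply₁₁,
        Matrix.fromBlocks_apply₁₂, Matrix.smul_apply, Matrix.zero_apply, smul_eq_mul,
        mul_one, mul_zero, zero_mul, Finset.sum_ite_eq', Finset.mem_univ, if_true,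
        Finset.sum_const_zero, add_zero, Pi.smul_apply]
      by_cases hii : i = i0 <;> simp [hii]
    | inr j =>
      simp [hvdef, Matrix.mulVec, dotProduct, Pi.single_apply,
        Fintype.sum_sum_type, mul_ite, ite_mul]
end

section
/- Let n > m ≥ 1, α ∈ (0, π/2), c(α) = −arctan(((n−m)/(n+m)) tan α). The matrix R₂' = n·cos(c(α)+α)·I_m + cos(c(α)−α)·𝟙ₘ𝟙ₘᵀ (the negative of the Jacobian block at the second equilibrium e₂) has a strictly positive eigenvalue n·cos(c(α)+α) whenever m ≥ 2, and its eigenvalue n·cos(c(α)+α) + m·cos(c(α)−α) is strictly positive for all α ∈ (0, π/2); hence R₂' always has a strictly positive eigenvalue. -/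
open Matrix Real

lemma mulVec_aux {m : ℕ} (a b : ℝ) (v : Fin m → ℝ) :
    ((a • (1 : Matrix (Fin m) (Fin m) ℝ) + b • (Matrix.of fun _ _ => (1:ℝ))).mulVec v)
      = fun i => a * v i + b * ∑ j, v j := by
  funext i
  simp [Matrix.mulVec, dotProduct, Matrix.add_apply, Matrix.one_apply, add_mul, ite_mul,
    Finset.sum_add_distrib, Finset.sum_ite_eq, Finset.mul_sum]

lemma hasEigen_of_mulVec {m : ℕ} (M : Matrix (Fin m) (Fin m) ℝ) (μ : ℝ)
    (v : Fin m → ℝ) (hv : v ≠ 0) (h : M.mulVec v = μ • v) :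
    Module.End.HasEigenvalue (Matrix.toLin' M) μ :=
  Module.End.hasEigenvalue_of_hasEigenvector
    ⟨Module.End.mem_eigenspace_iff.2 (by simpa [Matrix.toLin'_apply] using h), hv⟩

/-- The matrix `R₂' = n cos(c(α)+α) I_m + cos(c(α)−α) 𝟙𝟙ᵀ` has the strictly
positive eigenvalue `n cos(c(α)+α)` when `m ≥ 2`, and the eigenvalue
`n cos(c(α)+α) + m cos(c(α)−α)` is strictly positive for all `α ∈ (0, π/2)`;
hence `R₂'` always has a strictly positive eigenvalue. -/
theorem stmt_12 (n m : ℕ) (hmn : m < n) (hm : 1 ≤ m)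
    (α : ℝ) (hα0 : 0 < α) (hα1 : α < π / 2)
    (c : ℝ) (hc : c = -Real.arctan ((((n : ℝ) - m) / ((n : ℝ) + m)) * Real.tan α))
    (R₂' : Matrix (Fin m) (Fin m) ℝ)
    (hR₂' : R₂' = ((n : ℝ) * Real.cos (c + α)) • (1 : Matrix (Fin m) (Fin m) ℝ) +
      (Real.cos (c - α)) • (Matrix.of fun _ _ => (1 : ℝ))) :
    (2 ≤ m → 0 < (n : ℝ) * Real.cos (c + α) ∧
      Module.End.HasEigenvalue (Matrix.toLin' R₂') ((n : ℝ) * Real.cos (c + α))) ∧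
    (0 < (n : ℝ) * Real.cos (c + α) + (m : ℝ) * Real.cos (c - α) ∧
      Module.End.HasEigenvalue (Matrix.toLin' R₂')
        ((n : ℝ) * Real.cos (c + α) + (m : ℝ) * Real.cos (c - α))) ∧
    (∃ μ : ℝ, 0 < μ ∧ Module.End.HasEigenvalue (Matrix.toLin' R₂') μ) := by
  have hπ : (0:ℝ) < π / 2 := by positivity
  -- basic positivity facts
  have hnm : (0:ℝ) < (n:ℝ) - m := by
    have : (m:ℝ) < n := by exact_mod_cast hmn
    linarith
  have hm1 : (1:ℝ) ≤ (m:ℝ) := by exact_mod_cast hm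
  have hnmp : (0:ℝ) < (n:ℝ) + m := by linarith
  have htan : 0 < Real.tan α := Real.tan_pos_of_pos_of_lt_pi_div_two hα0 hα1
  set t : ℝ := (((n : ℝ) - m) / ((n : ℝ) + m)) * Real.tan α with ht
  have ht0 : 0 < t := by positivity
  have htlt : t < Real.tan α := by
    have hr : ((n : ℝ) - m) / ((n : ℝ) + m) < 1 := by
      rw [div_lt_one hnmp]; linarith
    calc t < 1 * Real.tan α := by
            exact mul_lt_mul_of_pos_right hr htan
      _ = Real.tan α := one_mul _
  have harc0 : 0 < Real.arctan t := by
    have := Real.arctan_strictMono ht0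
    simpa using this
  have harclt : Real.arctan t < α := by
    have h1 : Real.arctan t < Real.arctan (Real.tan α) := Real.arctan_strictMono htlt
    rwa [Real.arctan_tan (by linarith) hα1] at h1
  have harcpi : Real.arctan t < π / 2 := Real.arctan_lt_pi_div_two t
  -- c ∈ (-π/2, 0)
  have hc0 : c < 0 := by rw [hc]; linarith
  have hcpi : -(π/2) < c := by rw [hc]; linarith
  -- cos (c + α) > 0
  have hca0 : 0 < c + α := by rw [hc]; linarith
  have hcosca : 0 < Real.cos (c + α) :=
    Real.cos_pos_of_mem_Ioo ⟨by linarith, by linarith⟩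
  have hn1 : (1:ℝ) ≤ (n:ℝ) := by
    have : (1:ℕ) ≤ n := by omega
    exact_mod_cast this
  have ha : 0 < (n : ℝ) * Real.cos (c + α) := by positivity
  -- cos c > 0, sin c < 0, sin α > 0, cos α > 0
  have hcosc : 0 < Real.cos c := Real.cos_pos_of_mem_Ioo ⟨hcpi, by linarith⟩
  have hsinc : Real.sin c < 0 := by
    have : 0 < Real.sin (-c) := by
      apply Real.sin_pos_of_pos_of_lt_pi
      · linarith
      · have := Real.pi_gt_three; linarith
    rw [Real.sin_neg] at this; linarith
  have hsina : 0 < Real.sin α := by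
    apply Real.sin_pos_of_pos_of_lt_pi hα0
    have := Real.pi_gt_three; linarith
  have hcosa : 0 < Real.cos α := Real.cos_pos_of_mem_Ioo ⟨by linarith, hα1⟩
  -- key positivity of second eigenvalue
  have key : (n:ℝ) * Real.cos (c + α) + (m:ℝ) * Real.cos (c - α)
      = ((n:ℝ) + m) * (Real.cos c * Real.cos α)
        + ((n:ℝ) - m) * ((-Real.sin c) * Real.sin α) := by
    rw [Real.cos_add, Real.cos_sub]; ring
  have hb : 0 < (n:ℝ) * Real.cos (c + α) + (m:ℝ) * Real.cos (c - α) := by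
    rw [key]
    have h1 : 0 < ((n:ℝ) + m) * (Real.cos c * Real.cos α) := by positivity
    have h2 : 0 < ((n:ℝ) - m) * ((-Real.sin c) * Real.sin α) := by
      apply mul_pos hnm
      apply mul_pos (by linarith) hsina
    linarith
  -- eigenvalue with all-ones vector
  set a := (n:ℝ) * Real.cos (c + α)
  set b := Real.cos (c - α)
  have hne : Nonempty (Fin m) := ⟨⟨0, by omega⟩⟩
  have heig2 : Module.End.HasEigenvalue (Matrix.toLin' R₂') (a + (m:ℝ) * b) := by
    apply hasEigen_of_mulVec R₂' _ (fun _ => (1:ℝ))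
    · intro h
      have := congrFun h ⟨0, by omega⟩
      simp at this
    · rw [hR₂', mulVec_aux]
      funext i
      simp [mul_comm]
  refine ⟨?_, ⟨hb, heig2⟩, ⟨a + (m:ℝ)*b, hb, heig2⟩⟩
  intro h2m
  refine ⟨ha, ?_⟩
  set v : Fin m → ℝ := Pi.single ⟨0, by omega⟩ 1 - Pi.single ⟨1, by omega⟩ 1 with hv
  have hsum : ∑ j, v j = 0 := by
    rw [hv]
    simp [Finset.sum_sub_distrib, Finset.sum_pi_single']
  apply hasEigen_of_mulVec R₂' _ v
  · intro h
    have := congrFun h ⟨0, by omega⟩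
    rw [hv] at this
    simp [Pi.single_apply, Fin.ext_iff] at this
  · rw [hR₂', mulVec_aux]
    funext i
    simp [hsum, mul_comm]
end

section
/- (Proposition: w₂ > 0, general case.) Let m ≥ 3 and n > m be natural numbers, α ∈ (0, π/2), m₁ = m−1, m₂ = 1, and define s₁ = (n−m+1)sin α + sin 3α, s₂ = (n+m−1)cos α + cos 3α, S = √(s₁²+s₂²), c(α) = −arctan(s₁/s₂), a = cos(c(α)+α), b = cos(c(α)−α), c = −cos(c(α)+3α). Then S·((m−1)b + n·a − c) = (n−m+1)(n−m−1+2(m+1)cos²α) + 2(m−1)(8cos⁴α + (n+m−7)cos²α) + 1 > 0, and hence (m−1)b + n·a − c > 0. -/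
open Real

/-- General case `m ≥ 3`, `n > m`, `m₁ = m−1`, `m₂ = 1`: the identity
`S((m−1)b + na − c) = (n−m+1)(n−m−1+2(m+1)cos²α) + 2(m−1)(8cos⁴α+(n+m−7)cos²α) + 1`
holds and is strictly positive; hence `(m−1)b + na − c > 0`. -/
theorem stmt_14 (n m : ℕ) (hm : 3 ≤ m) (hmn : m < n)
    (α : ℝ) (hα0 : 0 < α) (hα1 : α < π / 2)
    (s₁ s₂ S cα a b c : ℝ)
    (hs₁ : s₁ = ((n : ℝ) - m + 1) * Real.sin α + Real.sin (3 * α))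
    (hs₂ : s₂ = ((n : ℝ) + m - 1) * Real.cos α + Real.cos (3 * α))
    (hS : S = Real.sqrt (s₁ ^ 2 + s₂ ^ 2))
    (hcα : cα = -Real.arctan (s₁ / s₂))
    (hs₂pos : 0 < s₂)
    (ha : a = Real.cos (cα + α)) (hb : b = Real.cos (cα - α))
    (hc : c = -Real.cos (cα + 3 * α)) :
    S * (((m : ℝ) - 1) * b + (n : ℝ) * a - c) =
      ((n : ℝ) - m + 1) * ((n : ℝ) - m - 1 + 2 * ((m : ℝ) + 1) * Real.cos α ^ 2) +
        2 * ((m : ℝ) - 1) * (8 * Real.cos α ^ 4 + ((n : ℝ) + m - 7) * Real.cos α ^ 2) + 1 ∧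
    0 < S * (((m : ℝ) - 1) * b + (n : ℝ) * a - c) ∧
    0 < ((m : ℝ) - 1) * b + (n : ℝ) * a - c := by
  have hS0 : 0 < S := by
    rw [hS]; exact Real.sqrt_pos.mpr (by positivity)
  have hsq : Real.sqrt (1 + (s₁ / s₂) ^ 2) = S / s₂ := by
    have h1 : 1 + (s₁ / s₂) ^ 2 = (s₁ ^ 2 + s₂ ^ 2) / s₂ ^ 2 := by
      field_simp; ring
    rw [h1, Real.sqrt_div (by positivity), Real.sqrt_sq hs₂pos.le, hS]
  have hcos : Real.cos cα = s₂ / S := by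
    rw [hcα, Real.cos_neg, Real.cos_arctan, hsq]
    field_simp
  have hsin : Real.sin cα = -s₁ / S := by
    rw [hcα, Real.sin_neg, Real.sin_arctan, hsq]
    field_simp
  have hSne : S ≠ 0 := ne_of_gt hS0
  have hSa : S * a = s₂ * Real.cos α + s₁ * Real.sin α := by
    rw [ha, Real.cos_add, hcos, hsin]; field_simp; ring
  have hSb : S * b = s₂ * Real.cos α - s₁ * Real.sin α := by
    rw [hb, Real.cos_sub, hcos, hsin]; field_simp; ring
  have hSc : S * c = -(s₂ * Real.cos (3 * α) + s₁ * Real.sin (3 * α)) := by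
    rw [hc, Real.cos_add, hcos, hsin]; field_simp; ring
  have h3s : Real.sin (3 * α) = 3 * Real.sin α - 4 * Real.sin α ^ 3 :=
    Real.sin_three_mul α
  have h3c : Real.cos (3 * α) = 4 * Real.cos α ^ 3 - 3 * Real.cos α :=
    Real.cos_three_mul α
  have hid : S * (((m : ℝ) - 1) * b + (n : ℝ) * a - c) =
      ((n : ℝ) - m + 1) * ((n : ℝ) - m - 1 + 2 * ((m : ℝ) + 1) * Real.cos α ^ 2) +
        2 * ((m : ℝ) - 1) * (8 * Real.cos α ^ 4 + ((n : ℝ) + m - 7) * Real.cos α ^ 2) + 1 := by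
    have expand : S * (((m : ℝ) - 1) * b + (n : ℝ) * a - c) =
        ((m : ℝ) - 1) * (S * b) + (n : ℝ) * (S * a) - S * c := by ring
    rw [expand, hSa, hSb, hSc, hs₁, hs₂, h3s, h3c]
    have hpyth := Real.sin_sq_add_cos_sq α
    linear_combination (-16 * Real.sin α ^ 2 + 16 * Real.sin α ^ 4
      - 16 * Real.cos α ^ 2 * Real.sin α ^ 2 + 16 * Real.cos α ^ 4
      + 8 * (m:ℝ) * Real.sin α ^ 2 - 8 * (m:ℝ) * Real.cos α ^ 2 + (m:ℝ) ^ 2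
      - 8 * (n:ℝ) * Real.sin α ^ 2 + 8 * (n:ℝ) * Real.cos α ^ 2
      - 2 * (n:ℝ) * (m:ℝ) + (n:ℝ) ^ 2) * hpyth
  have hm' : (3 : ℝ) ≤ m := by exact_mod_cast hm
  have hmn' : (m : ℝ) + 1 ≤ n := by exact_mod_cast hmn
  have hc2 : (0:ℝ) ≤ Real.cos α ^ 2 := sq_nonneg _
  have hc4 : (0:ℝ) ≤ Real.cos α ^ 4 := by positivity
  have hpos : 0 < S * (((m : ℝ) - 1) * b + (n : ℝ) * a - c) := by
    rw [hid]
    nlinarith [mul_nonneg (sub_nonneg.mpr hmn') hc2, mul_nonneg (sub_nonneg.mpr hm') hc2,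
      mul_nonneg (sub_nonneg.mpr hm') hc4]
  refine ⟨hid, hpos, ?_⟩
  rcases mul_pos_iff.mp hpos with ⟨_, h⟩ | ⟨h1, _⟩
  · exact h
  · linarith
end

section
/- Let m ≥ 2 and n > m, and let a = cos(c(α)+α) > 0 and w₂ = (m−1)·b + n·a − c > 0 for reals b, c (as arising from the Jacobian analysis with m₁ = m−1). Then the matrix M = D + C, with D = diag(n·a, …, n·a, −n·a) ∈ ℝ^{m×m} and C = 𝟙ₘ·(b, …, b, c), has a strictly negative real eigenvalue; namely λ₂ = (w₁ − √(w₁² + 4·n·a·w₂))/2 < 0 where w₁ = (m−1)b + c, with eigenvector (1, …, 1, φ)ᵀ for φ = (λ₂ − n·a − (m−1)b)/c when c ≠ 0. -/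
open Matrix Real

lemma sum_ite_fin' (m : ℕ) (hm : 1 ≤ m) (x y : ℝ) :
    ∑ j : Fin m, (if (j : ℕ) < m - 1 then x else y) = ((m : ℝ) - 1) * x + y := by
  obtain ⟨k, rfl⟩ : ∃ k, m = k + 1 := ⟨m - 1, by omega⟩
  rw [Fin.sum_univ_castSucc]
  simp only [Fin.coe_castSucc, Fin.val_last, Nat.add_sub_cancel, Fin.is_lt, if_true,
    lt_self_iff_false, if_false, Finset.sum_const, Finset.card_univ, Fintype.card_fin]
  push_cast
  ring

/-- With `a > 0` and `w₂ = (m−1)b + na − c > 0`, the matrix `D + C` (with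
`D = diag(na,…,na,−na)` and `C = 𝟙ₘ(b,…,b,c)`) has the strictly negative
eigenvalue `λ₂ = (w₁ − √(w₁² + 4naw₂))/2`, with eigenvector `(1,…,1,φ)ᵀ`,
`φ = (λ₂ − na − (m−1)b)/c`, when `c ≠ 0`. -/
theorem stmt_19 (m n : ℕ) (hm : 2 ≤ m) (hmn : m < n)
    (a b c : ℝ) (ha : 0 < a)
    (w₁ w₂ : ℝ)
    (hw₁ : w₁ = ((m : ℝ) - 1) * b + c)
    (hw₂ : w₂ = ((m : ℝ) - 1) * b + (n : ℝ) * a - c)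
    (hw₂pos : 0 < w₂)
    (D C : Matrix (Fin m) (Fin m) ℝ)
    (hD : D = Matrix.diagonal (fun i : Fin m => if (i : ℕ) < m - 1 then (n : ℝ) * a else -((n : ℝ) * a)))
    (hC : C = Matrix.of fun _ j : Fin m => if (j : ℕ) < m - 1 then b else c)
    (l₂ : ℝ) (hl₂ : l₂ = (w₁ - Real.sqrt (w₁ ^ 2 + 4 * n * a * w₂)) / 2) :
    l₂ < 0 ∧
    (∃ v : Fin m → ℝ, v ≠ 0 ∧ (D + C).mulVec v = l₂ • v) ∧
    (c ≠ 0 →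
      (D + C).mulVec
        (fun i : Fin m => if (i : ℕ) < m - 1 then 1 else (l₂ - (n : ℝ) * a - ((m : ℝ) - 1) * b) / c) =
      l₂ • (fun i : Fin m => if (i : ℕ) < m - 1 then 1 else (l₂ - (n : ℝ) * a - ((m : ℝ) - 1) * b) / c)) := by
  have hn : (0 : ℝ) < n := by
    have : 0 < n := by omega
    exact_mod_cast this
  have hpos : (0 : ℝ) < 4 * n * a * w₂ := by positivity
  set s := Real.sqrt (w₁ ^ 2 + 4 * n * a * w₂) with hs
  have hs0 : 0 ≤ s := Real.sqrt_nonneg _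
  have hs2 : s ^ 2 = w₁ ^ 2 + 4 * n * a * w₂ := by
    rw [hs, Real.sq_sqrt]; nlinarith [sq_nonneg w₁]
  -- l₂ < 0
  have hneg : l₂ < 0 := by
    rw [hl₂]
    have : w₁ < s := by nlinarith
    linarith
  -- quadratic identity
  have hq : l₂ ^ 2 - (((m : ℝ) - 1) * b + c) * l₂
      - n * a * (((m : ℝ) - 1) * b + n * a - c) = 0 := by
    rw [← hw₁, ← hw₂, hl₂]; nlinarith [hs2]
  -- general mulVec computation
  have hmul : ∀ (x y : ℝ), (D + C).mulVec (fun j : Fin m => if (j : ℕ) < m - 1 then x else y)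
      = fun i : Fin m => (if (i : ℕ) < m - 1 then n * a * x else -(n * a) * y)
          + (((m : ℝ) - 1) * (b * x) + c * y) := by
    intro x y
    funext i
    rw [Matrix.add_mulVec, hD, hC]
    simp only [Pi.add_apply, Matrix.mulVec_diagonal]
    have hCv : (Matrix.of fun _ j : Fin m => if (j : ℕ) < m - 1 then b else c).mulVec
        (fun j : Fin m => if (j : ℕ) < m - 1 then x else y) i
        = ((m : ℝ) - 1) * (b * x) + c * y := by
      simp only [Matrix.mulVec, dotProduct, Matrix.of_apply]
      rw [← sum_ite_fin' m (by omega) (b * x) (c * y)]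
      apply Finset.sum_congr rfl
      intro j _
      split <;> ring
    rw [hCv]
    split <;> ring
  -- the explicit eigenvector for c ≠ 0
  have h3 : c ≠ 0 →
      (D + C).mulVec
        (fun i : Fin m => if (i : ℕ) < m - 1 then 1 else (l₂ - (n : ℝ) * a - ((m : ℝ) - 1) * b) / c) =
      l₂ • (fun i : Fin m => if (i : ℕ) < m - 1 then 1 else (l₂ - (n : ℝ) * a - ((m : ℝ) - 1) * b) / c) := by
    intro hc
    set φ := (l₂ - (n : ℝ) * a - ((m : ℝ) - 1) * b) / c with hφ
    have hcφ : c * φ = l₂ - n * a - ((m : ℝ) - 1) * b := by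
      rw [hφ]; field_simp
    rw [hmul 1 φ]
    funext i
    simp only [Pi.smul_apply, smul_eq_mul]
    split
    · linear_combination hcφ
    · have key : c * (-(n * a) * φ + (((m : ℝ) - 1) * (b * 1) + c * φ)) = c * (l₂ * φ) := by
        linear_combination (c - n * a - l₂) * hcφ - hq
      exact mul_left_cancel₀ hc key
  refine ⟨hneg, ?_, h3⟩
  by_cases hc : c = 0
  · -- v = (0,…,0,1); here l₂ = -na
    subst hc
    have hl : l₂ = -(n * a) := by
      have h2 : (l₂ + n * a) * (l₂ - (((m : ℝ) - 1) * b + n * a)) = 0 := by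
        linear_combination hq
      rcases mul_eq_zero.mp h2 with h | h
      · linarith
      · exfalso
        rw [hw₂] at hw₂pos
        nlinarith
    refine ⟨fun j : Fin m => if (j : ℕ) < m - 1 then 0 else 1, ?_, ?_⟩
    · intro h0
      have := congrFun h0 ⟨m - 1, by omega⟩
      simp at this
    · rw [hmul 0 1]
      funext i
      simp only [Pi.smul_apply, smul_eq_mul]
      split
      · simp [hl]
      · rw [hl]; ring
  · refine ⟨fun i : Fin m => if (i : ℕ) < m - 1 then 1 else (l₂ - (n : ℝ) * a - ((m : ℝ) - 1) * b) / c,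
      ?_, h3 hc⟩
    intro h0
    have := congrFun h0 ⟨0, by omega⟩
    simp only [Fin.val_zero] at this
    rw [if_pos (by omega)] at this
    simp at this
end
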